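/- Let Σ ∈ ℝ^{d×d} be a circulant positive semidefinite covariance matrix with eigenvalues (λ_k)_{k=0}^{d−1} in the discrete Fourier basis, let ω = e^{2πi/d}, fix σ > 0, and define h_k := σ²/(λ_k + σ²) and q_r := (1/d) Σ_{k=0}^{d−1} h_k ω^{rk}. Define the cyclic total variation TV(h) := Σ_{k=0}^{d−1} |h_{k+1} − h_k| with indices taken modulo d. Then for all n ∈ {1, …, ⌊d/2⌋}, |q_n| ≤ TV(h)/(4n); consequently, for i ≠ j at wrap-around distance n, the denoiser sensitivity satisfies |∂[m_σ]_i/∂x_j| ≤ TV(h)/(4n). -/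

import Mathlib

noncomputable section

/-- The primitive `d`-th root of unity `ω = e^{2πi/d}`. -/
def dftOmega (d : ℕ) : ℂ := Complex.exp (2 * Real.pi * Complex.I / d)

/-- The Fourier vector `(ω^{jk})_j` with frequency `k`. -/
def fourierVec (d : ℕ) (k : Fin d) : Fin d → ℂ := fun j => dftOmega d ^ ((j : ℕ) * (k : ℕ))

/-- `q_r = (1/d) Σ_k h_k ω^{rk}`, the inverse DFT of `h` evaluated at `r`. -/
def qCoef (d : ℕ) (h : Fin d → ℝ) (r : ℕ) : ℂ :=
  (d : ℂ)⁻¹ * ∑ k : Fin d, (h k : ℂ) * dftOmega d ^ (r * (k : ℕ))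

/-- The cyclic total variation `TV(h) = Σ_k |h_{k+1} − h_k|` (indices mod `d`). -/
def cyclicTV {d : ℕ} (h : Fin d → ℝ) : ℝ :=
  ∑ k : Fin d, |h ⟨((k : ℕ) + 1) % d, Nat.mod_lt _ k.pos⟩ - h k|

/-- The wrap-around distance `min{|i−j|, d−|i−j|}` between indices `i, j` of `Fin d`. -/
def wrapDist {d : ℕ} (i j : Fin d) : ℕ :=
  min ((i : ℤ) - (j : ℤ)).natAbs (d - ((i : ℤ) - (j : ℤ)).natAbs)

namespace CircAux

open Complex Finset Matrix

variable {d : ℕ}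

lemma hprim (hd : d ≠ 0) : IsPrimitiveRoot (dftOmega d) d :=
  Complex.isPrimitiveRoot_exp d hd

lemma omega_ne_zero : dftOmega d ≠ 0 := Complex.exp_ne_zero _

lemma omega_pow_d (hd : d ≠ 0) : dftOmega d ^ d = 1 := (hprim hd).pow_eq_one

lemma zpow_mod (hd : d ≠ 0) (a : ℤ) : dftOmega d ^ a = dftOmega d ^ (a % (d:ℤ)) := by
  conv_lhs => rw [← Int.emod_add_mul_ediv a d]
  rw [zpow_add₀ omega_ne_zero, _root_.zpow_mul]
  norm_cast
  rw [omega_pow_d hd, _root_.one_zpow, mul_one]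

lemma zpow_congr (hd : d ≠ 0) {a b : ℤ} (hab : a % d = b % d) :
    dftOmega d ^ a = dftOmega d ^ b := by
  rw [zpow_mod hd a, zpow_mod hd b, hab]

lemma sum_zpow (hd : d ≠ 0) (m : ℤ) :
    ∑ k : Fin d, dftOmega d ^ (m * (k : ℕ)) = if (d:ℤ) ∣ m then (d:ℂ) else 0 := by
  have hw : ∀ k : Fin d, dftOmega d ^ (m * (k:ℕ)) = (dftOmega d ^ m) ^ (k:ℕ) := by
    intro k
    rw [_root_.zpow_mul, zpow_natCast]
  simp_rw [hw]
  by_cases h : (d:ℤ) ∣ m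
  · rw [if_pos h, ((hprim hd).zpow_eq_one_iff_dvd m).mpr h]
    simp
  · rw [if_neg h]
    have hne1 : dftOmega d ^ m ≠ 1 := fun hc => h (((hprim hd).zpow_eq_one_iff_dvd m).mp hc)
    have hpow : (dftOmega d ^ m) ^ d = 1 := by
      rw [← zpow_natCast (dftOmega d ^ m) d, ← _root_.zpow_mul, mul_comm, _root_.zpow_mul]
      norm_cast
      rw [omega_pow_d hd, _root_.one_zpow]
    rw [Fin.sum_univ_eq_sum_range (fun i => (dftOmega d ^ m) ^ i) d]
    rw [geom_sum_eq hne1, hpow, sub_self, zero_div]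

lemma dvd_iff_eq {l j : Fin d} : (d:ℤ) ∣ ((l:ℕ):ℤ) - ((j:ℕ):ℤ) ↔ l = j := by
  constructor
  · intro hdvd
    have h1 : d ∣ (((l:ℕ):ℤ) - ((j:ℕ):ℤ)).natAbs := by
      have := Int.natAbs_dvd_natAbs.mpr hdvd
      simpa using this
    have hl := l.isLt; have hj := j.isLt
    have hlt : (((l:ℕ):ℤ) - ((j:ℕ):ℤ)).natAbs < d := by omega
    have h0 := Nat.eq_zero_of_dvd_of_lt h1 hlt
    exact Fin.ext (by omega)
  · rintro rfl; simp

lemma span_zero (hd : d ≠ 0) (M : Matrix (Fin d) (Fin d) ℂ)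
    (h : ∀ k : Fin d, M.mulVec (fourierVec d k) = 0) : M = 0 := by
  ext i j
  have key : (0:ℂ) = (d:ℂ) * M i j := by
    calc (0:ℂ) = ∑ k : Fin d, (M.mulVec (fourierVec d k)) i * dftOmega d ^ (-((j:ℕ):ℤ) * (k:ℕ)) := by
          simp [h]
    _ = ∑ k : Fin d, ∑ l : Fin d, M i l * dftOmega d ^ ((((l:ℕ):ℤ) - ((j:ℕ):ℤ)) * (k:ℕ)) := by
          refine Finset.sum_congr rfl fun k _ => ?_
          rw [Matrix.mulVec, dotProduct, Finset.sum_mul]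
          refine Finset.sum_congr rfl fun l _ => ?_
          rw [mul_assoc]
          congr 1
          rw [fourierVec]
          rw [show dftOmega d ^ ((l:ℕ) * (k:ℕ)) = dftOmega d ^ ((((l:ℕ):ℤ)) * ((k:ℕ):ℤ)) by
            rw [← zpow_natCast]; norm_cast]
          rw [← zpow_add₀ omega_ne_zero]
          congr 1; ring
    _ = ∑ l : Fin d, M i l * ∑ k : Fin d, dftOmega d ^ ((((l:ℕ):ℤ) - ((j:ℕ):ℤ)) * (k:ℕ)) := by
          rw [Finset.sum_comm]
          exact Finset.sum_congr rfl fun l _ => by rw [Finset.mul_sum]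
    _ = (d:ℂ) * M i j := by
          rw [Finset.sum_eq_single j]
          · rw [sum_zpow hd, if_pos (dvd_iff_eq.mpr rfl), mul_comm]
          · intro l _ hlj
            rw [sum_zpow hd, if_neg (fun hc => hlj (dvd_iff_eq.mp hc)), mul_zero]
          · intro hj; exact absurd (Finset.mem_univ j) hj
  have hd0 : (d:ℂ) ≠ 0 := Nat.cast_ne_zero.mpr hd
  exact (mul_eq_zero.mp key.symm).resolve_left hd0

lemma val_sub_zpow (hd : d ≠ 0) (i j : Fin d) :
    dftOmega d ^ ((((i - j : Fin d):ℕ)):ℤ) = dftOmega d ^ (((i:ℕ):ℤ) - ((j:ℕ):ℤ)) := by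
  refine zpow_congr hd ?_
  have hv : ((i - j : Fin d):ℕ) = ((d - (j:ℕ)) + (i:ℕ)) % d := by rw [Fin.sub_def]
  rw [hv]
  push_cast [Nat.cast_sub j.isLt.le]
  rw [Int.emod_emod_of_dvd _ dvd_rfl]
  conv_lhs => rw [show (d:ℤ) - (j:ℕ) + (i:ℕ) = ((i:ℕ) - ((j:ℕ):ℤ)) + 1 * d by ring]
  rw [Int.add_mul_emod_self_right]

lemma Q_mulVec (hd : d ≠ 0) (h : Fin d → ℝ) (k : Fin d) :
    (Matrix.circulant fun r : Fin d => qCoef d h (r:ℕ)).mulVec (fourierVec d k)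
      = fun i => (h k : ℂ) * fourierVec d k i := by
  funext i
  have hd0 : (d:ℂ) ≠ 0 := Nat.cast_ne_zero.mpr hd
  have stepA : ∀ j : Fin d, qCoef d h ((i - j : Fin d):ℕ) * dftOmega d ^ ((j:ℕ) * (k:ℕ))
      = (d:ℂ)⁻¹ * ∑ l : Fin d, (h l : ℂ) *
          (dftOmega d ^ ((((i:ℕ):ℤ)) * ((l:ℕ):ℤ)) * dftOmega d ^ ((((k:ℕ):ℤ) - ((l:ℕ):ℤ)) * ((j:ℕ):ℤ))) := by
    intro j
    rw [qCoef, mul_assoc, Finset.sum_mul]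
    congr 1
    refine Finset.sum_congr rfl fun l _ => ?_
    rw [mul_assoc]
    congr 1
    rw [show dftOmega d ^ ((((i - j : Fin d):ℕ)) * (l:ℕ))
        = (dftOmega d ^ ((((i - j : Fin d):ℕ)):ℤ)) ^ ((l:ℕ):ℤ) by
      rw [← _root_.zpow_mul, ← zpow_natCast]; norm_cast]
    rw [val_sub_zpow hd i j, ← _root_.zpow_mul]
    rw [show dftOmega d ^ ((j:ℕ) * (k:ℕ)) = dftOmega d ^ ((((j:ℕ):ℤ)) * ((k:ℕ):ℤ)) by
      rw [← zpow_natCast]; norm_cast]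
    rw [← zpow_add₀ omega_ne_zero, ← zpow_add₀ omega_ne_zero]
    congr 1; ring
  calc (Matrix.circulant fun r : Fin d => qCoef d h (r:ℕ)).mulVec (fourierVec d k) i
      = ∑ j : Fin d, qCoef d h ((i - j : Fin d):ℕ) * dftOmega d ^ ((j:ℕ) * (k:ℕ)) := by
        rw [Matrix.mulVec, dotProduct]
        exact Finset.sum_congr rfl fun j _ => by rw [Matrix.circulant_apply]; rfl
    _ = (d:ℂ)⁻¹ * ∑ j : Fin d, ∑ l : Fin d, (h l : ℂ) *
          (dftOmega d ^ ((((i:ℕ):ℤ)) * ((l:ℕ):ℤ)) * dftOmega d ^ ((((k:ℕ):ℤ) - ((l:ℕ):ℤ)) * ((j:ℕ):ℤ))) := by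
        rw [Finset.mul_sum Finset.univ (fun j : Fin d => ∑ l : Fin d, ((h l : ℝ) : ℂ) *
          (dftOmega d ^ ((((i:ℕ):ℤ)) * ((l:ℕ):ℤ)) * dftOmega d ^ ((((k:ℕ):ℤ) - ((l:ℕ):ℤ)) * ((j:ℕ):ℤ)))) ((d:ℂ)⁻¹)]
        exact Finset.sum_congr rfl fun j _ => stepA j
    _ = (d:ℂ)⁻¹ * ∑ l : Fin d, ((h l : ℂ) * dftOmega d ^ ((((i:ℕ):ℤ)) * ((l:ℕ):ℤ)) *
          ∑ j : Fin d, dftOmega d ^ ((((k:ℕ):ℤ) - ((l:ℕ):ℤ)) * ((j:ℕ):ℤ))) := by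
        congr 1
        rw [Finset.sum_comm]
        refine Finset.sum_congr rfl fun l _ => ?_
        rw [Finset.mul_sum Finset.univ (fun j : Fin d => dftOmega d ^ ((((k:ℕ):ℤ) - ((l:ℕ):ℤ)) * ((j:ℕ):ℤ)))
          (((h l : ℝ) : ℂ) * dftOmega d ^ ((((i:ℕ):ℤ)) * ((l:ℕ):ℤ)))]
        exact Finset.sum_congr rfl fun j _ => by ring
    _ = (h k : ℂ) * fourierVec d k i := by
        have hz : ∀ l : Fin d, ∑ j : Fin d, dftOmega d ^ ((((k:ℕ):ℤ) - ((l:ℕ):ℤ)) * ((j:ℕ):ℤ))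
            = if (d:ℤ) ∣ (((k:ℕ):ℤ) - ((l:ℕ):ℤ)) then (d:ℂ) else 0 := by
          intro l
          exact sum_zpow hd _
        rw [Finset.sum_eq_single k]
        · rw [hz k, if_pos (dvd_iff_eq.mpr rfl), fourierVec]
          rw [show dftOmega d ^ ((i:ℕ) * (k:ℕ)) = dftOmega d ^ (((i:ℕ):ℤ) * ((k:ℕ):ℤ)) by
            rw [← zpow_natCast]; norm_cast]
          field_simp
        · intro l _ hlk
          rw [hz l, if_neg (fun hc => hlk (dvd_iff_eq.mp hc).symm), mul_zero]
        · intro hk; exact absurd (Finset.mem_univ k) hk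

lemma abs_omega (hd : d ≠ 0) : ‖dftOmega d‖ = 1 := by
  rw [dftOmega]
  rw [Complex.norm_exp]
  have : (2 * (Real.pi:ℂ) * Complex.I / d).re = 0 := by
    simp [Complex.div_re]
  rw [this, Real.exp_zero]

lemma abs_z_sub_one (hd : 2 ≤ d) (n : ℕ) (hn1 : 1 ≤ n) (hn2 : n ≤ d / 2) :
    ‖dftOmega d ^ n - 1‖ = 2 * Real.sin (Real.pi * n / d) := by
  have hd0 : (0:ℝ) < d := by positivity
  set θ : ℝ := 2 * Real.pi * n / d with hθ
  have hz : dftOmega d ^ n = Complex.exp ((θ:ℂ) * Complex.I) := by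
    rw [dftOmega, ← Complex.exp_nat_mul]
    congr 1
    have : ((θ:ℝ):ℂ) = 2 * (Real.pi:ℂ) * n / d := by
      rw [hθ]; push_cast; ring
    rw [this]
    have hdc : (d:ℂ) ≠ 0 := by exact_mod_cast (by positivity : (d:ℝ) ≠ 0)
    field_simp
  have hre : (dftOmega d ^ n - 1).re = Real.cos θ - 1 := by
    rw [hz]; simp [Complex.exp_ofReal_mul_I_re]
  have him : (dftOmega d ^ n - 1).im = Real.sin θ := by
    rw [hz]; simp [Complex.exp_ofReal_mul_I_im]
  have hsq : ‖dftOmega d ^ n - 1‖ ^ 2 = 2 - 2 * Real.cos θ := by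
    rw [Complex.sq_norm, Complex.normSq_apply, hre, him]
    nlinarith [Real.sin_sq_add_cos_sq θ]
  have h2n : 2 * n ≤ d := by omega
  have hhalf : θ / 2 = Real.pi * n / d := by rw [hθ]; ring
  have hrange1 : 0 ≤ Real.pi * n / d := by positivity
  have hrange2 : Real.pi * n / d ≤ Real.pi / 2 := by
    rw [div_le_div_iff₀ hd0 (by norm_num : (0:ℝ) < 2)]
    have : (2:ℝ) * n ≤ d := by exact_mod_cast h2n
    nlinarith [Real.pi_pos]
  have hsinsq : Real.sin (θ/2) ^ 2 = (1 - Real.cos θ) / 2 := by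
    have h1 := Real.abs_sin_half θ
    have h2 : |Real.sin (θ/2)| ^ 2 = (1 - Real.cos θ) / 2 := by
      rw [h1]
      exact Real.sq_sqrt (by nlinarith [Real.cos_le_one θ])
    rwa [_root_.sq_abs] at h2
  have hsin_nonneg : 0 ≤ Real.sin (θ/2) := by
    rw [hhalf]
    exact Real.sin_nonneg_of_nonneg_of_le_pi hrange1
      (le_trans hrange2 (by linarith [Real.pi_pos]))
  have hsq2 : ‖dftOmega d ^ n - 1‖ ^ 2 = (2 * Real.sin (θ/2)) ^ 2 := by
    rw [hsq]; nlinarith [hsinsq]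
  have habs := norm_nonneg (dftOmega d ^ n - 1)
  have hb : 0 ≤ 2 * Real.sin (θ/2) := by linarith
  have hfin : ‖dftOmega d ^ n - 1‖ = 2 * Real.sin (θ/2) := by
    calc ‖dftOmega d ^ n - 1‖
        = Real.sqrt ((‖dftOmega d ^ n - 1‖)^2) := (Real.sqrt_sq habs).symm
      _ = Real.sqrt ((2 * Real.sin (θ/2))^2) := by rw [hsq2]
      _ = 2 * Real.sin (θ/2) := Real.sqrt_sq hb
  rw [hfin, hhalf]

lemma succ_eq (hd : 2 ≤ d) [NeZero d] (k : Fin d) :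
    (⟨((k:ℕ)+1) % d, Nat.mod_lt _ k.pos⟩ : Fin d) = k + 1 := by
  apply Fin.ext
  rw [Fin.val_add, Fin.val_one', Nat.mod_eq_of_lt (show 1 < d by omega)]

lemma qbound (hd : 2 ≤ d) (h : Fin d → ℝ) (n : ℕ) (hn1 : 1 ≤ n) (hn2 : n ≤ d / 2) :
    ‖qCoef d h n‖ ≤ cyclicTV h / (4 * n) := by
  have hd0 : d ≠ 0 := by omega
  haveI : NeZero d := ⟨hd0⟩
  have hdR : (0:ℝ) < d := by positivity
  set z : ℂ := dftOmega d ^ n with hzdef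
  have hz1 : z ≠ 1 := (hprim hd0).pow_ne_one_of_pos_of_lt (by omega) (by omega)
  have hzd : z ^ d = 1 := by
    rw [hzdef, ← pow_mul, mul_comm, pow_mul, omega_pow_d hd0, one_pow]
  have habsz : ‖z‖ = 1 := by rw [hzdef, norm_pow, abs_omega hd0, one_pow]
  have hpowmod : ∀ a : ℕ, z ^ a = z ^ (a % d) := by
    intro a
    conv_lhs => rw [← Nat.div_add_mod a d]
    rw [pow_add, pow_mul, hzd, one_pow, one_mul]
  set S : ℂ := ∑ k : Fin d, (h k : ℂ) * z ^ (k:ℕ) with hS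
  have hq : qCoef d h n = (d:ℂ)⁻¹ * S := by
    rw [qCoef]; congr 1; exact Finset.sum_congr rfl fun k _ => by rw [pow_mul]
  have hTV : cyclicTV h = ∑ k : Fin d, |h (k+1) - h k| := by
    rw [cyclicTV]
    exact Finset.sum_congr rfl fun k _ => by rw [succ_eq hd]
  have hTVnn : 0 ≤ cyclicTV h := by
    rw [hTV]; exact Finset.sum_nonneg fun k _ => abs_nonneg _
  have key : (z - 1) * S = ∑ k : Fin d, ((h k : ℂ) - (h (k+1) : ℂ)) * z ^ ((k:ℕ)+1) := by
    have e1 : ∑ k : Fin d, (h k : ℂ) * z ^ ((k:ℕ)+1) = z * S := by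
      rw [hS, Finset.mul_sum]
      exact Finset.sum_congr rfl fun k _ => by rw [pow_succ]; ring
    have e2 : ∑ k : Fin d, (h (k+1) : ℂ) * z ^ ((k:ℕ)+1) = S := by
      have e3 : ∀ k : Fin d, (h (k+1) : ℂ) * z ^ ((k:ℕ)+1)
          = (h (k+1) : ℂ) * z ^ (((k+1 : Fin d)):ℕ) := by
        intro k
        congr 1
        rw [hpowmod ((k:ℕ)+1)]
        congr 1
        rw [Fin.val_add, Fin.val_one', Nat.mod_eq_of_lt (show 1 < d by omega)]
      rw [Finset.sum_congr rfl fun k _ => e3 k, hS]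
      exact Equiv.sum_comp (Equiv.addRight (1 : Fin d)) (fun j : Fin d => (h j : ℂ) * z ^ (j:ℕ))
    calc (z - 1) * S = z * S - S := by ring
    _ = ∑ k : Fin d, ((h k : ℂ) - (h (k+1) : ℂ)) * z ^ ((k:ℕ)+1) := by
        rw [← e1, ← e2, ← Finset.sum_sub_distrib]
        exact Finset.sum_congr rfl fun k _ => by ring
  have hbound : ‖(z-1) * S‖ ≤ cyclicTV h := by
    rw [key, hTV]
    refine le_trans (norm_sum_le _ _) ?_
    refine Finset.sum_le_sum fun k _ => ?_
    rw [norm_mul, norm_pow, habsz, one_pow, mul_one]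
    rw [show ((h k : ℂ) - (h (k+1) : ℂ)) = ((h k - h (k+1) : ℝ) : ℂ) by push_cast; ring]
    rw [Complex.norm_real, Real.norm_eq_abs, abs_sub_comm]
  have habsz1 : ‖z - 1‖ = 2 * Real.sin (Real.pi * n / d) :=
    abs_z_sub_one hd n hn1 hn2
  have hsin : 2 * (n:ℝ) / d ≤ Real.sin (Real.pi * n / d) := by
    have hx1 : 0 ≤ Real.pi * n / d := by positivity
    have hx2 : Real.pi * n / d ≤ Real.pi / 2 := by
      rw [div_le_div_iff₀ hdR (by norm_num : (0:ℝ) < 2)]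
      have : (2:ℝ) * n ≤ d := by
        have : 2 * n ≤ d := by omega
        exact_mod_cast this
      nlinarith [Real.pi_pos]
    have := Real.mul_le_sin hx1 hx2
    have hpi := Real.pi_pos
    calc 2 * (n:ℝ) / d = 2 / Real.pi * (Real.pi * n / d) := by
          field_simp
      _ ≤ Real.sin (Real.pi * n / d) := this
  have hnR : (0:ℝ) < n := by exact_mod_cast hn1
  have hA : 4 * (n:ℝ) / d ≤ ‖z - 1‖ := by
    rw [habsz1, show (4:ℝ)*n/d = 2*(2*(n:ℝ)/d) by ring]
    linarith
  have hApos : 0 < ‖z - 1‖ := lt_of_lt_of_le (by positivity) hA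
  have hSle : ‖S‖ ≤ cyclicTV h / ‖z - 1‖ := by
    rw [le_div_iff₀ hApos]
    calc ‖S‖ * ‖z - 1‖ = ‖(z-1) * S‖ := by
          rw [norm_mul]; ring
      _ ≤ cyclicTV h := hbound
  have hqabs : ‖qCoef d h n‖ = (d:ℝ)⁻¹ * ‖S‖ := by
    rw [hq, norm_mul, norm_inv, Complex.norm_natCast]
  rw [hqabs]
  calc (d:ℝ)⁻¹ * ‖S‖ ≤ (d:ℝ)⁻¹ * (cyclicTV h / ‖z - 1‖) := by
        exact mul_le_mul_of_nonneg_left hSle (by positivity)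
    _ = cyclicTV h / (d * ‖z - 1‖) := by
        rw [eq_div_iff (mul_pos hdR hApos).ne']
        field_simp
    _ ≤ cyclicTV h / (4 * n) := by
        apply div_le_div_of_nonneg_left hTVnn (by positivity)
        calc (4:ℝ) * n = d * (4 * n / d) := by field_simp
          _ ≤ d * ‖z - 1‖ := by
              apply mul_le_mul_of_nonneg_left _ hdR.le
              linarith [hA]

lemma q_conj (hd : d ≠ 0) (h : Fin d → ℝ) {n : ℕ} (hn : n ≤ d) :
    ‖qCoef d h (d - n)‖ = ‖qCoef d h n‖ := by
  have hconj : qCoef d h (d - n) = starRingEnd ℂ (qCoef d h n) := by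
    rw [qCoef, qCoef, _root_.map_mul, map_sum]
    congr 1
    · rw [← Complex.ofReal_natCast, ← Complex.ofReal_inv, Complex.conj_ofReal]
    refine Finset.sum_congr rfl fun k _ => ?_
    rw [_root_.map_mul, Complex.conj_ofReal]
    congr 1
    have habs : ‖dftOmega d ^ (n * (k:ℕ))‖ = 1 := by
      rw [norm_pow, abs_omega hd, one_pow]
    have hmul : dftOmega d ^ ((d - n) * (k:ℕ)) * dftOmega d ^ (n * (k:ℕ)) = 1 := by
      rw [← pow_add, show (d - n) * (k:ℕ) + n * (k:ℕ) = d * (k:ℕ) by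
        rw [← Nat.add_mul, Nat.sub_add_cancel hn], pow_mul, omega_pow_d hd, one_pow]
    have hconj2 : starRingEnd ℂ (dftOmega d ^ (n * (k:ℕ))) * dftOmega d ^ (n * (k:ℕ)) = 1 := by
      rw [mul_comm, Complex.mul_conj, ← Complex.sq_norm, habs]
      norm_num
    have e1 : dftOmega d ^ ((d - n) * (k:ℕ)) = (dftOmega d ^ (n * (k:ℕ)))⁻¹ :=
      eq_inv_of_mul_eq_one_left hmul
    have e2 : starRingEnd ℂ (dftOmega d ^ (n * (k:ℕ))) = (dftOmega d ^ (n * (k:ℕ)))⁻¹ :=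
      eq_inv_of_mul_eq_one_left hconj2
    rw [e1, e2]
  rw [hconj, Complex.norm_conj]

lemma jacobian_eq (hd : 2 ≤ d) (v : Fin d → ℝ)
    (hPSD : (Matrix.circulant v).PosSemidef)
    (lam : Fin d → ℝ)
    (hlam : ∀ k : Fin d,
      ((Matrix.circulant v).map (Complex.ofReal)).mulVec (fourierVec d k) =
        fun j => (lam k : ℂ) * fourierVec d k j)
    (σ : ℝ) (hσ : 0 < σ) :
    ((Matrix.circulant v *
        (Matrix.circulant v + σ ^ 2 • (1 : Matrix (Fin d) (Fin d) ℝ))⁻¹).map Complex.ofReal)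
      = 1 - Matrix.circulant
          (fun r : Fin d => qCoef d (fun k => σ ^ 2 / (lam k + σ ^ 2)) (r:ℕ)) := by
  have hd0 : d ≠ 0 := by omega
  set A : Matrix (Fin d) (Fin d) ℝ := Matrix.circulant v with hA
  set B : Matrix (Fin d) (Fin d) ℝ := A + σ ^ 2 • (1 : Matrix (Fin d) (Fin d) ℝ) with hB
  set hh : Fin d → ℝ := fun k => σ ^ 2 / (lam k + σ ^ 2) with hhh
  set Q : Matrix (Fin d) (Fin d) ℂ :=
    Matrix.circulant (fun r : Fin d => qCoef d hh (r:ℕ)) with hQ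
  -- B is positive definite
  have hσI : (σ ^ 2 • (1 : Matrix (Fin d) (Fin d) ℝ)).PosDef := by
    exact Matrix.PosDef.one.smul (pow_pos hσ 2)
  have hBpd : B.PosDef := Matrix.PosDef.posSemidef_add hPSD hσI
  have hBdet : IsUnit B.det := isUnit_iff_ne_zero.mpr hBpd.det_pos.ne'
  -- complexifications
  set Ac : Matrix (Fin d) (Fin d) ℂ := A.map Complex.ofReal with hAc
  set Bc : Matrix (Fin d) (Fin d) ℂ := B.map Complex.ofReal with hBc
  have map_mul' : ∀ (M N : Matrix (Fin d) (Fin d) ℝ),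
      (M * N).map Complex.ofReal = M.map Complex.ofReal * N.map Complex.ofReal := by
    intro M N
    have := Matrix.map_mul (L := M) (M := N) (f := Complex.ofRealHom)
    exact this
  have hdetmap : (B.map Complex.ofReal).det = ((B.det : ℝ) : ℂ) := by
    have := RingHom.map_det Complex.ofRealHom B
    rw [RingHom.mapMatrix_apply] at this
    exact this.symm
  have hBcdet : IsUnit Bc.det := by
    rw [hBc, hdetmap]
    exact isUnit_iff_ne_zero.mpr (by exact_mod_cast hBpd.det_pos.ne')
  have hBcAc : Bc = Ac + (σ ^ 2 : ℂ) • (1 : Matrix (Fin d) (Fin d) ℂ) := by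
    ext i j
    simp only [hBc, hBc, hB, Matrix.map_apply, Matrix.add_apply, Matrix.smul_apply,
      Matrix.one_apply, hAc]
    by_cases hij : i = j <;> simp [hij]
  have hBcvec : ∀ k : Fin d, Bc.mulVec (fourierVec d k)
      = fun j => ((lam k : ℂ) + (σ^2:ℂ)) * fourierVec d k j := by
    intro k
    rw [hBcAc, Matrix.add_mulVec, hlam k]
    funext j
    have : ((σ ^ 2 : ℂ) • (1 : Matrix (Fin d) (Fin d) ℂ)) *ᵥ (fourierVec d k)
        = (σ^2:ℂ) • fourierVec d k := by
      rw [Matrix.smul_mulVec, Matrix.one_mulVec]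
    rw [this]
    simp [Pi.add_apply]
    ring
  -- fourierVec nonzero and eigenvalue nonvanishing
  have hF0 : ∀ k : Fin d, fourierVec d k ⟨0, by omega⟩ = 1 := by
    intro k; simp [fourierVec]
  have hlamne : ∀ k : Fin d, (lam k : ℂ) + (σ^2:ℂ) ≠ 0 := by
    intro k hc
    have h0 : Bc.mulVec (fourierVec d k) = 0 := by
      rw [hBcvec k]; funext j; rw [hc]; simp
    have : fourierVec d k = 0 := by
      have h1 : Bc⁻¹ * Bc = 1 := Matrix.nonsing_inv_mul Bc hBcdet
      calc fourierVec d k = (1 : Matrix (Fin d) (Fin d) ℂ).mulVec (fourierVec d k) := by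
            rw [Matrix.one_mulVec]
        _ = (Bc⁻¹ * Bc).mulVec (fourierVec d k) := by rw [h1]
        _ = Bc⁻¹.mulVec (Bc.mulVec (fourierVec d k)) := by rw [Matrix.mulVec_mulVec]
        _ = 0 := by rw [h0]; simp [Matrix.mulVec_zero]
    rw [funext_iff] at this
    have := this ⟨0, by omega⟩
    rw [hF0 k] at this
    exact one_ne_zero this
  have hlamneR : ∀ k : Fin d, lam k + σ^2 ≠ 0 := by
    intro k hc
    exact hlamne k (by exact_mod_cast congrArg (Complex.ofReal) hc)
  -- Q * Bc = σ² • 1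
  have hQB : Q * Bc = (σ^2:ℂ) • (1 : Matrix (Fin d) (Fin d) ℂ) := by
    have := span_zero hd0 (Q * Bc - (σ^2:ℂ) • (1 : Matrix (Fin d) (Fin d) ℂ)) ?_
    · linear_combination (norm := module) this
    intro k
    rw [Matrix.sub_mulVec]
    have e1 : (Q * Bc).mulVec (fourierVec d k)
        = Q.mulVec (Bc.mulVec (fourierVec d k)) := (Matrix.mulVec_mulVec _ _ _).symm
    have e2 : Bc.mulVec (fourierVec d k) = ((lam k : ℂ) + (σ^2:ℂ)) • fourierVec d k := by
      rw [hBcvec k]; rfl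
    have e3 : Q.mulVec (((lam k : ℂ) + (σ^2:ℂ)) • fourierVec d k)
        = ((lam k : ℂ) + (σ^2:ℂ)) • Q.mulVec (fourierVec d k) := Matrix.mulVec_smul _ _ _
    have e4 : Q.mulVec (fourierVec d k) = (hh k : ℂ) • fourierVec d k := by
      rw [hQ, Q_mulVec hd0 hh k]; rfl
    have e5 : ((σ^2:ℂ) • (1 : Matrix (Fin d) (Fin d) ℂ)).mulVec (fourierVec d k)
        = (σ^2:ℂ) • fourierVec d k := by
      rw [Matrix.smul_mulVec, Matrix.one_mulVec]
    rw [e1, e2, e3, e4, e5]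
    have hc : ((lam k : ℂ) + (σ^2:ℂ)) * (hh k : ℂ) = (σ^2:ℂ) := by
      rw [hhh]
      push_cast
      field_simp
      exact mul_div_cancel_right₀ _ (hlamne k)
    rw [smul_smul, hc, sub_self]
  have hσ2 : (σ^2:ℂ) ≠ 0 := by
    have : (σ:ℝ) ≠ 0 := hσ.ne'
    exact_mod_cast pow_ne_zero 2 (Complex.ofReal_ne_zero.mpr this)
  have hBcinv : Bc⁻¹ = (σ^2:ℂ)⁻¹ • Q := by
    apply Matrix.inv_eq_left_inv
    rw [Matrix.smul_mul, hQB, smul_smul, inv_mul_cancel₀ hσ2, one_smul]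
  -- map of the inverse
  have hBinvmap : (B⁻¹).map Complex.ofReal = Bc⁻¹ := by
    symm
    apply Matrix.inv_eq_right_inv
    rw [hBc, ← map_mul', Matrix.mul_nonsing_inv B hBdet,
      Matrix.map_one _ Complex.ofReal_zero Complex.ofReal_one]
  -- final computation
  have hmap : ((A * B⁻¹).map Complex.ofReal) = Ac * Bc⁻¹ := by
    rw [map_mul', hBinvmap]
  rw [hmap]
  have hAcB : Ac = Bc - (σ^2:ℂ) • (1 : Matrix (Fin d) (Fin d) ℂ) := by
    rw [hBcAc]; abel
  rw [hAcB, Matrix.sub_mul, Matrix.mul_nonsing_inv Bc hBcdet, hBcinv,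
    Matrix.smul_mul, Matrix.one_mul, smul_smul, mul_inv_cancel₀ hσ2, one_smul]
lemma val_cases (hd : 2 ≤ d) {i j : Fin d} (hij : i ≠ j) {n : ℕ} (hw : wrapDist i j = n) :
    ((i - j : Fin d):ℕ) = n ∨ (((i - j : Fin d):ℕ) = d - n ∧ n ≤ d) := by
  have hv : ((i - j : Fin d):ℕ) = (d - (j:ℕ) + (i:ℕ)) % d := by rw [Fin.sub_def]
  have hij' : (i:ℕ) ≠ (j:ℕ) := fun hc => hij (Fin.ext hc)
  have hi := i.isLt; have hj := j.isLt
  have hcast : ((i:ℤ) - (j:ℤ)).natAbs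
      = if (j:ℕ) ≤ (i:ℕ) then (i:ℕ) - (j:ℕ) else (j:ℕ) - (i:ℕ) := by
    split <;> omega
  unfold wrapDist at hw
  rw [hcast] at hw
  by_cases hle : (j:ℕ) ≤ (i:ℕ)
  · rw [if_pos hle] at hw
    have hmod : (d - (j:ℕ) + (i:ℕ)) % d = (i:ℕ) - (j:ℕ) := by
      rw [Nat.mod_eq_sub_mod (by omega), show d - (j:ℕ) + (i:ℕ) - d = (i:ℕ) - (j:ℕ) by omega,
        Nat.mod_eq_of_lt (by omega)]
    rw [hv, hmod]
    omega
  · rw [if_neg hle] at hw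
    have hmod : (d - (j:ℕ) + (i:ℕ)) % d = d - ((j:ℕ) - (i:ℕ)) := by
      rw [Nat.mod_eq_of_lt (by omega)]
      omega
    rw [hv, hmod]
    omega

end CircAux

open CircAux in
/-- for a circulant positive semidefinite `Σ` with eigenvalues `λ_k` in the discrete
Fourier basis, `σ > 0`, and `h_k = σ²/(λ_k + σ²)`, for all `n ∈ {1, …, ⌊d/2⌋}` one has
`|q_n| ≤ TV(h)/(4n)`; consequently, for `i ≠ j` at wrap-around distance `n`, the sensitivity
(the `(i,j)` entry of the Jacobian `Σ(Σ + σ²I)⁻¹`) is at most `TV(h)/(4n)`. -/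
theorem circulant_sensitivity_decay {d : ℕ} (hd : 2 ≤ d) (v : Fin d → ℝ)
    (hPSD : (Matrix.circulant v).PosSemidef)
    (lam : Fin d → ℝ)
    (hlam : ∀ k : Fin d,
      ((Matrix.circulant v).map (Complex.ofReal)).mulVec (fourierVec d k) =
        fun j => (lam k : ℂ) * fourierVec d k j)
    (σ : ℝ) (hσ : 0 < σ) :
    ∀ n : ℕ, 1 ≤ n → n ≤ d / 2 →
      ‖qCoef d (fun k => σ ^ 2 / (lam k + σ ^ 2)) n‖ ≤
        cyclicTV (fun k => σ ^ 2 / (lam k + σ ^ 2)) / (4 * n) ∧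
      ∀ i j : Fin d, i ≠ j → wrapDist i j = n →
        |(Matrix.circulant v *
            (Matrix.circulant v + σ ^ 2 • (1 : Matrix (Fin d) (Fin d) ℝ))⁻¹) i j| ≤
          cyclicTV (fun k => σ ^ 2 / (lam k + σ ^ 2)) / (4 * n) := by
  intro n hn1 hn2
  have hd0 : d ≠ 0 := by omega
  refine ⟨qbound hd _ n hn1 hn2, ?_⟩
  intro i j hij hw
  have hjac := jacobian_eq hd v hPSD lam hlam σ hσ
  set M : Matrix (Fin d) (Fin d) ℝ :=
    Matrix.circulant v * (Matrix.circulant v + σ ^ 2 • (1 : Matrix (Fin d) (Fin d) ℝ))⁻¹ with hM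
  have hentry : ((M i j : ℝ) : ℂ)
      = - qCoef d (fun k => σ ^ 2 / (lam k + σ ^ 2)) ((i - j : Fin d):ℕ) := by
    have h1 : (M.map Complex.ofReal) i j
        = (1 - Matrix.circulant
            (fun r : Fin d => qCoef d (fun k => σ ^ 2 / (lam k + σ ^ 2)) (r:ℕ))) i j := by
      rw [hjac]
    rw [Matrix.map_apply] at h1
    rw [h1, Matrix.sub_apply, Matrix.one_apply_ne hij, Matrix.circulant_apply, zero_sub]
  have habs : |M i j| = ‖qCoef d (fun k => σ ^ 2 / (lam k + σ ^ 2)) ((i - j : Fin d):ℕ)‖ := by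
    rw [← Real.norm_eq_abs, ← Complex.norm_real, hentry, norm_neg]
  rw [habs]
  rcases val_cases hd hij hw with hcase | ⟨hcase, hnd⟩
  · rw [hcase]
    exact qbound hd _ n hn1 hn2
  · rw [hcase, q_conj hd0 _ hnd]
    exact qbound hd _ n hn1 hn2


end
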